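/- If a cubic graph G admits a red-blue induced perfect matching, then the number of vertices of G is divisible by 4. -/

import Mathlib

/-- If a cubic graph admits a red-blue induced perfect matching, then its number of
vertices is divisible by 4. -/
theorem cubic_induced_pm_card_div_four {V : Type*} [Fintype V] (G : SimpleGraph V)
    (hcubic : ∀ v, (G.neighborSet v).ncard = 3)
    (h : ∃ c : V → Bool, ∀ v, ∃! w, G.Adj v w ∧ c w = c v) :
    4 ∣ Fintype.card V := by
  classical
  obtain ⟨c, hc⟩ := h
  -- degree as a filter card
  have hdeg : ∀ v, (Finset.univ.filter (fun w => G.Adj v w)).card = 3 := by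
    intro v
    have h3 := hcubic v
    rw [Set.ncard_eq_toFinset_card'] at h3
    rw [← h3]
    congr 1
    ext w
    simp [SimpleGraph.mem_neighborSet]
  -- the same-color neighbor filter is a singleton
  have hsame : ∀ v, Finset.univ.filter (fun w => G.Adj v w ∧ c w = c v)
      = {(hc v).choose} := by
    intro v
    ext w
    simp only [Finset.mem_filter, Finset.mem_univ, true_and, Finset.mem_singleton]
    constructor
    · intro hw
      exact (hc v).choose_spec.2 w hw
    · rintro rfl
      exact (hc v).choose_spec.1
  -- each vertex has exactly 2 neighbors of the other color
  have hdiff : ∀ v, (Finset.univ.filter (fun w => G.Adj v w ∧ ¬ c w = c v)).card = 2 := by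
    intro v
    have hsplit := Finset.card_filter_add_card_filter_not
      (s := Finset.univ.filter (fun w => G.Adj v w)) (p := fun w => c w = c v)
    rw [Finset.filter_filter, Finset.filter_filter, hdeg v] at hsplit
    rw [hsame v] at hsplit
    simp only [Finset.card_singleton] at hsplit
    omega
  set R : Finset V := Finset.univ.filter (fun v => c v = true) with hR
  set B : Finset V := Finset.univ.filter (fun v => c v = false) with hB
  -- double counting the red-blue edges
  have hcross : (2 : ℕ) * R.card = 2 * B.card := by
    have key : ∀ (b : Bool) (v : V),
        (∑ w, if G.Adj v w ∧ c v = b ∧ c w = !b then 1 else 0)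
          = if c v = b then 2 else 0 := by
      intro b v
      by_cases hv : c v = b
      · rw [if_pos hv]
        rw [← hdiff v]
        rw [Finset.card_filter]
        apply Finset.sum_congr rfl
        intro w _
        rw [hv]
        cases b <;> simp
      · rw [if_neg hv]
        apply Finset.sum_eq_zero
        intro w _
        rw [if_neg]
        rintro ⟨-, hvb, -⟩
        exact hv hvb
    have hLHS : (∑ v, ∑ w, if G.Adj v w ∧ c v = true ∧ c w = false then 1 else 0)
        = 2 * R.card := by
      calc (∑ v, ∑ w, if G.Adj v w ∧ c v = true ∧ c w = false then 1 else 0)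
          = ∑ v, if c v = true then 2 else 0 := by
            apply Finset.sum_congr rfl
            intro v _
            simpa using key true v
        _ = ∑ v ∈ R, 2 := by rw [hR, Finset.sum_filter]
        _ = 2 * R.card := by rw [Finset.sum_const, smul_eq_mul, mul_comm]
    have hRHS : (∑ v, ∑ w, if G.Adj v w ∧ c v = true ∧ c w = false then 1 else 0)
        = 2 * B.card := by
      rw [Finset.sum_comm]
      calc (∑ w, ∑ v, if G.Adj v w ∧ c v = true ∧ c w = false then 1 else 0)
          = ∑ w, if c w = false then 2 else 0 := by
            apply Finset.sum_congr rfl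
            intro w _
            have := key false w
            simp only [Bool.not_false] at this
            rw [← this]
            apply Finset.sum_congr rfl
            intro v _
            congr 1
            simp only [eq_iff_iff]
            constructor
            · rintro ⟨ha, hv, hw⟩
              exact ⟨ha.symm, hw, hv⟩
            · rintro ⟨ha, hw, hv⟩
              exact ⟨ha.symm, hv, hw⟩
        _ = ∑ w ∈ B, 2 := by rw [hB, Finset.sum_filter]
        _ = 2 * B.card := by rw [Finset.sum_const, smul_eq_mul, mul_comm]
    rw [← hLHS, hRHS]
  have hRB : R.card = B.card := by omega
  have hcard : Fintype.card V = R.card + B.card := by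
    have hsplit := Finset.card_filter_add_card_filter_not
      (s := (Finset.univ : Finset V)) (p := fun v => c v = true)
    simp only [Bool.not_eq_true] at hsplit
    rw [hR, hB, ← Finset.card_univ]
    omega
  -- the red class has even cardinality: handshake lemma on the red matching
  have hEvenR : Even R.card := by
    set H : SimpleGraph V :=
      { Adj := fun v w => G.Adj v w ∧ c v = c w ∧ c v = true
        symm := by
          constructor
          rintro v w ⟨ha, hcc, hv⟩
          exact ⟨ha.symm, hcc.symm, hcc ▸ hv⟩
        loopless := by
          constructor
          rintro v ⟨ha, -, -⟩
          exact G.loopless.irrefl v ha } with hH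
    haveI : DecidableRel H.Adj := fun a b => Classical.dec _
    have hdegH : ∀ v, H.degree v = if c v = true then 1 else 0 := by
      intro v
      rw [← SimpleGraph.card_neighborFinset_eq_degree, SimpleGraph.neighborFinset_eq_filter]
      by_cases hv : c v = true
      · rw [if_pos hv]
        have : Finset.univ.filter (fun w => H.Adj v w)
            = Finset.univ.filter (fun w => G.Adj v w ∧ c w = c v) := by
          apply Finset.filter_congr
          intro w _
          simp only [hH, eq_iff_iff]
          constructor
          · rintro ⟨ha, hcc, -⟩
            exact ⟨ha, hcc.symm⟩
          · rintro ⟨ha, hcc⟩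
            exact ⟨ha, hcc.symm, hv⟩
        rw [this, hsame v, Finset.card_singleton]
      · rw [if_neg hv]
        rw [Finset.card_eq_zero, Finset.filter_eq_empty_iff]
        rintro w - ⟨-, -, hv'⟩
        exact hv hv'
    have hsum : ∑ v, H.degree v = R.card := by
      calc ∑ v, H.degree v = ∑ v, if c v = true then 1 else 0 := by
            exact Finset.sum_congr rfl fun v _ => hdegH v
        _ = R.card := by rw [← Finset.card_filter]
    have := SimpleGraph.sum_degrees_eq_twice_card_edges H
    rw [hsum] at this
    exact ⟨H.edgeFinset.card, by omega⟩
  obtain ⟨k, hk⟩ := hEvenR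
  rw [hcard, ← hRB, hk]
  omega
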